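/- Let T be a primitive reversible quantum channel on d×d matrices with full-rank stationary state σ, such that T is lazy (T = (id + S)/2 for some channel S, so the similarity transform Γ_σ^{1/2} ∘ T ∘ Γ_σ^{−1/2} is Hermitian with eigenvalues β_i ∈ [0,1]). Let T_t = e^{t(T−id)} be the continuous-time semigroup generated by L = T − id. Then for every density matrix ρ and positive integer n, χ²(T*ⁿ(ρ), σ) ≤ χ²(T*_n(ρ), σ), i.e. the discrete iterates converge at least as fast (in χ²) as the continuous semigroup evaluated at integer times. -/

import Mathlib

open Matrix
open scoped ComplexOrder

noncomputable section

/-- Square complex matrices. -/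
abbrev Mat (d : ℕ) := Matrix (Fin d) (Fin d) ℂ

variable {d : ℕ}

/-- `A ^ r` for a selfadjoint matrix `A`, via the continuous functional calculus. -/
def matPow (A : Mat d) (r : ℝ) : Mat d :=
  cfc (fun x : ℝ => x ^ r) A

/-- `|A| = (A† A)^{1/2}`. -/
def matAbs (A : Mat d) : Mat d :=
  cfc Real.sqrt (Aᴴ * A)

/-- Matrix logarithm via the continuous functional calculus. -/
def matLog (A : Mat d) : Mat d :=
  cfc Real.log A

/-- The `σ`-weighted `L_p` norm `‖f‖_{p,σ} = (Tr |σ^{1/(2p)} f σ^{1/(2p)}|^p)^{1/p}`. -/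
def pnorm (σ f : Mat d) (p : ℝ) : ℝ :=
  ((matPow (matAbs (matPow σ (1/(2*p)) * f * matPow σ (1/(2*p)))) p).trace.re) ^ (1/p)

/-- The χ²-divergence `χ²(ρ,σ) = Tr((ρ−σ)σ^{-1/2}(ρ−σ)σ^{-1/2})`. -/
def chi2 (ρ σ : Mat d) : ℝ :=
  ((ρ - σ) * matPow σ (-(1/2)) * (ρ - σ) * matPow σ (-(1/2))).trace.re

/-- The continuous-time semigroup `e^{t(T*−id)} = e^{−t} Σ_k (t^k/k!) (T*)^k`
generated by `L = T − id`, in the Schrödinger picture. -/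
def contT (Tstar : Module.End ℂ (Mat d)) (t : ℝ) (ρ : Mat d) : Mat d :=
  ∑' k : ℕ, ((Real.exp (-t) * t ^ k / (Nat.factorial k) : ℝ) : ℂ) • ((Tstar ^ k) ρ)

open scoped InnerProductSpace

namespace Aux

abbrev E (d : ℕ) := EuclideanSpace ℂ (Fin d × Fin d)

def toE : Mat d ≃ₗ[ℂ] E d where
  toFun A := WithLp.toLp 2 (fun p : Fin d × Fin d => A p.1 p.2)
  invFun x := Matrix.of fun i j => x (i, j)
  map_add' _ _ := rfl
  map_smul' _ _ := rfl
  left_inv _ := rfl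
  right_inv _ := rfl

lemma inner_toE (A B : Mat d) : ⟪toE A, toE B⟫_ℂ = (Aᴴ * B).trace := by
  simp only [PiLp.inner_apply, RCLike.inner_apply, Matrix.trace, Matrix.diag,
    Matrix.mul_apply, Matrix.conjTranspose_apply, toE, LinearEquiv.coe_mk]
  rw [Fintype.sum_prod_type]
  simp [Finset.mul_sum, mul_comm]
  rw [Finset.sum_comm]
  rfl

lemma norm_toE_sq (A : Mat d) : (‖toE A‖ : ℝ) ^ 2 = ((Aᴴ * A).trace).re := by
  rw [← inner_toE, ← inner_self_eq_norm_sq (𝕜 := ℂ)]; rfl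

section sigma
variable {σ : Mat d}

lemma spec_pos (hσ : σ.PosDef) : ∀ x ∈ spectrum ℝ σ, 0 < x := by
  intro x hx
  rw [Matrix.IsHermitian.spectrum_real_eq_range_eigenvalues hσ.1] at hx
  obtain ⟨i, rfl⟩ := hx
  exact hσ.eigenvalues_pos i

lemma contOn (f : ℝ → ℝ) : ContinuousOn f (spectrum ℝ σ) :=
  Set.Finite.continuousOn Matrix.finite_real_spectrum f

lemma matPow_mul_matPow (hσ : σ.PosDef) (r s : ℝ) : matPow σ r * matPow σ s = matPow σ (r + s) := by
  unfold matPow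
  rw [← cfc_mul _ _ σ (contOn _) (contOn _)]
  exact cfc_congr fun x hx => (Real.rpow_add (spec_pos hσ x hx) r s).symm

lemma matPow_zero (hσ : σ.PosDef) : matPow σ 0 = 1 := by
  unfold matPow
  rw [show (fun x : ℝ => x ^ (0:ℝ)) = fun _ => 1 by ext x; exact Real.rpow_zero x]
  exact cfc_const_one ℝ σ hσ.1.isSelfAdjoint

lemma matPow_one' (hσ : σ.PosDef) : matPow σ 1 = σ := by
  unfold matPow
  rw [show (fun x : ℝ => x ^ (1:ℝ)) = fun x => x by ext x; exact Real.rpow_one x]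
  exact cfc_id' ℝ σ hσ.1.isSelfAdjoint

lemma matPow_herm (r : ℝ) : (matPow σ r)ᴴ = matPow σ r := by
  have h : IsSelfAdjoint (matPow σ r) := cfc_predicate _ σ
  exact h

lemma trace_pos_part (hσ : σ.PosDef) (M : Mat d) :
    0 ≤ ((σ * (Mᴴ * M)).trace).re := by
  have hw : matPow σ (1/2) * matPow σ (1/2) = σ := by
    rw [matPow_mul_matPow hσ]
    have : (1/2 + 1/2 : ℝ) = 1 := by norm_num
    rw [this, matPow_one' hσ]
  set w := matPow σ (1/2) with hwdef
  have h1 : σ * (Mᴴ * M) = w * (w * Mᴴ * M) := by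
    rw [← hw]; noncomm_ring
  rw [h1, Matrix.trace_mul_comm]
  have h3 : (w * Mᴴ * M) * w = (M * w)ᴴ * (M * w) := by
    rw [conjTranspose_mul, matPow_herm]; noncomm_ring
  rw [h3, ← norm_toE_sq]
  positivity

end sigma

section kraus

variable {σ : Mat d} {ι : Type} [Fintype ι] {K : ι → Mat d}

/-- Heisenberg-picture Kraus map. -/
def SH (K : ι → Mat d) (A : Mat d) : Mat d := ∑ j, (K j)ᴴ * A * K j

lemma SH_herm (A : Mat d) : (SH K A)ᴴ = SH K Aᴴ := by
  simp [SH, Matrix.conjTranspose_sum, Matrix.conjTranspose_mul, mul_assoc]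

lemma KS_identity (hK2 : ∑ j, (K j)ᴴ * K j = 1) (A : Mat d) :
    ∑ j, (A * K j - K j * SH K A)ᴴ * (A * K j - K j * SH K A)
      = SH K (Aᴴ * A) - (SH K A)ᴴ * SH K A := by
  set B := SH K A with hB
  have e : ∀ j, (A * K j - K j * B)ᴴ * (A * K j - K j * B)
      = (K j)ᴴ * (Aᴴ * A) * K j - ((K j)ᴴ * Aᴴ * K j) * B - Bᴴ * ((K j)ᴴ * A * K j)
        + Bᴴ * ((K j)ᴴ * K j) * B := by
    intro j
    simp only [conjTranspose_sub, conjTranspose_mul]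
    noncomm_ring
  rw [Finset.sum_congr rfl (fun j _ => e j)]
  have hBH : ∑ j, (K j)ᴴ * Aᴴ * K j = Bᴴ := by
    rw [hB, SH_herm]; rfl
  simp only [Finset.sum_add_distrib, Finset.sum_sub_distrib, ← Finset.sum_mul, ← Finset.mul_sum]
  rw [hBH, hK2]
  have h5 : ∑ i, (K i)ᴴ * A * K i = B := by rw [hB]; rfl
  rw [h5, SH]
  noncomm_ring

lemma KS_trace {σ' : Mat d} (hpos : ∀ M : Mat d, 0 ≤ ((σ' * (Mᴴ * M)).trace).re)
    (hK2 : ∑ j, (K j)ᴴ * K j = 1) (A : Mat d) :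
    ((σ' * ((SH K A)ᴴ * SH K A)).trace).re ≤ ((σ' * SH K (Aᴴ * A)).trace).re := by
  have h := KS_identity hK2 A
  have key : 0 ≤ ((σ' * (SH K (Aᴴ * A) - (SH K A)ᴴ * SH K A)).trace).re := by
    rw [← h, Finset.mul_sum, Matrix.trace_sum, Complex.re_sum]
    exact Finset.sum_nonneg fun j _ => hpos _
  rw [mul_sub, Matrix.trace_sub, Complex.sub_re] at key
  linarith

lemma SH_fix_trace {σ' : Mat d} (hfix : ∑ j, K j * σ' * (K j)ᴴ = σ') (Y : Mat d) :
    (σ' * SH K Y).trace = (σ' * Y).trace := by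
  rw [SH, Finset.mul_sum, Matrix.trace_sum]
  have e : ∀ j, (σ' * ((K j)ᴴ * Y * K j)).trace = ((K j * σ' * (K j)ᴴ) * Y).trace := by
    intro j
    rw [show σ' * ((K j)ᴴ * Y * K j) = (σ' * (K j)ᴴ * Y) * K j from by noncomm_ring,
      Matrix.trace_mul_comm,
      show K j * (σ' * (K j)ᴴ * Y) = (K j * σ' * (K j)ᴴ) * Y from by noncomm_ring]
  rw [Finset.sum_congr rfl (fun j _ => e j), ← Matrix.trace_sum, ← Finset.sum_mul, hfix]

lemma contraction_core (m w w' σ' : Mat d)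
    (hmherm : mᴴ = m) (hwherm : wᴴ = w) (hw'herm : w'ᴴ = w')
    (hmm : m * m = w') (hmw : m * w = 1) (hww : w * w = σ')
    (hwsw : w' * σ' * w' = w')
    (hpos : ∀ M : Mat d, 0 ≤ ((σ' * (Mᴴ * M)).trace).re)
    (hK2 : ∑ j, (K j)ᴴ * K j = 1) (hfix : ∑ j, K j * σ' * (K j)ᴴ = σ') (X : Mat d) :
    ‖toE (m * (∑ j, K j * X * (K j)ᴴ))‖ ≤ ‖toE (m * X)‖ := by
  set SX := ∑ j, K j * X * (K j)ᴴ with hSX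
  set A₀ := w' * SX with hA₀
  set Z := SH K A₀ with hZ
  set t := ‖toE (m * SX)‖ with ht
  have hZH : Zᴴ = SH K A₀ᴴ := by rw [hZ, SH_herm]
  have ht2 : t ^ 2 = ((SXᴴ * A₀).trace).re := by
    rw [ht, norm_toE_sq]
    congr 2
    rw [conjTranspose_mul, hmherm, hA₀, ← hmm]; noncomm_ring
  have e2 : (SXᴴ * A₀).trace = (Xᴴ * Z).trace := by
    rw [hZ, SH]
    conv_lhs => rw [hSX]
    rw [conjTranspose_sum, Finset.sum_mul, Matrix.trace_sum, Finset.mul_sum, Matrix.trace_sum]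
    refine Finset.sum_congr rfl fun j _ => ?_
    rw [show (K j * X * (K j)ᴴ)ᴴ * A₀ = K j * (Xᴴ * ((K j)ᴴ * A₀)) from by
        simp only [conjTranspose_mul, conjTranspose_conjTranspose]; noncomm_ring,
      Matrix.trace_mul_comm,
      show Xᴴ * ((K j)ᴴ * A₀) * K j = Xᴴ * ((K j)ᴴ * A₀ * K j) from by noncomm_ring]
  have e3 : (Xᴴ * Z).trace = ⟪toE (m * X), toE (w * Z)⟫_ℂ := by
    rw [inner_toE, conjTranspose_mul, hmherm,
      show Xᴴ * m * (w * Z) = Xᴴ * ((m * w) * Z) from by noncomm_ring, hmw, one_mul]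
  have e4 : ‖toE (w * Z)‖ ^ 2 = ((σ' * (Z * Zᴴ)).trace).re := by
    have h : ((w * Z)ᴴ * (w * Z)).trace = (σ' * (Z * Zᴴ)).trace := by
      rw [show (w * Z)ᴴ * (w * Z) = (Zᴴ * σ') * Z from by
          rw [conjTranspose_mul, hwherm, ← hww]; noncomm_ring,
        Matrix.trace_mul_comm,
        show Z * (Zᴴ * σ') = (Z * Zᴴ) * σ' from by noncomm_ring,
        Matrix.trace_mul_comm]
    rw [norm_toE_sq, h]
  have e5 : ((σ' * (Z * Zᴴ)).trace).re ≤ t ^ 2 := by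
    have h1 : Z * Zᴴ = (SH K A₀ᴴ)ᴴ * SH K A₀ᴴ := by
      conv_lhs => rw [← conjTranspose_conjTranspose Z, hZH]
      rw [← hZH]
      rw [show Zᴴᴴ = Z from conjTranspose_conjTranspose Z, hZH]
    have h2 := KS_trace hpos hK2 A₀ᴴ
    rw [conjTranspose_conjTranspose] at h2
    have h3 : (σ' * SH K (A₀ * A₀ᴴ)).trace = (σ' * (A₀ * A₀ᴴ)).trace := SH_fix_trace hfix _
    have h4 : (σ' * (A₀ * A₀ᴴ)).trace = (SXᴴ * A₀).trace := by
      rw [show σ' * (A₀ * A₀ᴴ) = (σ' * A₀) * A₀ᴴ from by noncomm_ring,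
        Matrix.trace_mul_comm,
        show A₀ᴴ * (σ' * A₀) = A₀ᴴ * σ' * A₀ from by noncomm_ring]
      conv_lhs => rw [hA₀, conjTranspose_mul, hw'herm]
      rw [show SXᴴ * w' * σ' * (w' * SX) = SXᴴ * (w' * σ' * w') * SX from by noncomm_ring,
        hwsw, hA₀]
      noncomm_ring
    rw [h1, ht2, ← h4, ← h3]
    exact h2
  -- assemble
  have hwZ : ‖toE (w * Z)‖ ≤ t := by
    have h1 : ‖toE (w * Z)‖ ^ 2 ≤ t ^ 2 := by rw [e4]; exact e5
    have h0 : (0:ℝ) ≤ t := norm_nonneg _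
    nlinarith [norm_nonneg (toE (w * Z))]
  have hmain : t ^ 2 ≤ ‖toE (m * X)‖ * t := by
    calc t ^ 2 = ((Xᴴ * Z).trace).re := by rw [ht2, e2]
      _ ≤ ‖⟪toE (m * X), toE (w * Z)⟫_ℂ‖ := by
          rw [e3]; exact Complex.re_le_norm _
      _ ≤ ‖toE (m * X)‖ * ‖toE (w * Z)‖ := norm_inner_le_norm _ _
      _ ≤ ‖toE (m * X)‖ * t := by
          exact mul_le_mul_of_nonneg_left hwZ (norm_nonneg _)
  rcases eq_or_lt_of_le (norm_nonneg (toE (m * SX))) with h0 | h0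
  · rw [ht, ← h0]; exact norm_nonneg _
  · have := le_of_mul_le_mul_right (by nlinarith : t * t ≤ ‖toE (m * X)‖ * t) h0
    exact this

end kraus

/-- two-sided multiplication. -/
def conjBy (M : Mat d) : Module.End ℂ (Mat d) where
  toFun A := M * A * M
  map_add' A B := by noncomm_ring
  map_smul' c A := by
    simp only [RingHom.id_apply]
    rw [mul_smul_comm, smul_mul_assoc]

@[simp] lemma conjBy_apply (M A : Mat d) : conjBy M A = M * A * M := rfl

section phi

variable (σ : Mat d) (Tstar : Module.End ℂ (Mat d))

/-- similarity transform of `Tstar`. -/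
def Phi : Module.End ℂ (Mat d) :=
  conjBy (matPow σ (-(1/4))) ∘ₗ Tstar ∘ₗ conjBy (matPow σ (1/4))

lemma Phi_apply (A : Mat d) :
    Phi σ Tstar A = matPow σ (-(1/4)) * Tstar (matPow σ (1/4) * A * matPow σ (1/4))
      * matPow σ (-(1/4)) := rfl

/-- `Phi` transported to Euclidean space. -/
def PhiE : Module.End ℂ (E d) :=
  (toE.toLinearMap ∘ₗ Phi σ Tstar) ∘ₗ (toE.symm.toLinearMap)

lemma PhiE_apply (A : Mat d) : PhiE σ Tstar (toE A) = toE (Phi σ Tstar A) := by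
  simp only [PhiE, LinearMap.comp_apply, LinearEquiv.coe_coe, LinearEquiv.symm_apply_apply]

variable {σ Tstar}

lemma PhiE_symmetric (hσ : σ.PosDef)
    (hrev : ∀ A B : Mat d,
        (matPow σ (-(1/2)) * Aᴴ * matPow σ (-(1/2)) * Tstar B).trace
          = (matPow σ (-(1/2)) * (Tstar A)ᴴ * matPow σ (-(1/2)) * B).trace) :
    (PhiE σ Tstar).IsSymmetric := by
  have hq : (matPow σ (-(1/4)))ᴴ = matPow σ (-(1/4)) := matPow_herm _
  have hp : (matPow σ (1/4))ᴴ = matPow σ (1/4) := matPow_herm _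
  have hmp : matPow σ (-(1/2)) * matPow σ (1/4) = matPow σ (-(1/4)) := by
    rw [matPow_mul_matPow hσ]; norm_num
  have hpm : matPow σ (1/4) * matPow σ (-(1/2)) = matPow σ (-(1/4)) := by
    rw [matPow_mul_matPow hσ]; norm_num
  set q := matPow σ (-(1/4)) with hqdef
  set p := matPow σ (1/4) with hpdef
  set mm := matPow σ (-(1/2)) with hmmdef
  intro x y
  rw [← toE.apply_symm_apply x, ← toE.apply_symm_apply y]
  set A := toE.symm x with hA
  set B := toE.symm y with hB
  rw [PhiE_apply, PhiE_apply, inner_toE, inner_toE, Phi_apply, Phi_apply, ← hqdef, ← hpdef]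
  set TA := Tstar (p * A * p) with hTA
  set TB := Tstar (p * B * p) with hTB
  have key := hrev (p * A * p) (p * B * p)
  rw [← hTA, ← hTB] at key
  have L : ((q * TA * q)ᴴ * B).trace = (mm * TAᴴ * mm * (p * B * p)).trace := by
    conv_lhs => rw [show (q * TA * q)ᴴ * B = ((q * TAᴴ * q) * B : Mat d) from by
      rw [conjTranspose_mul, conjTranspose_mul, hq]; noncomm_ring]
    conv_rhs => rw [show mm * TAᴴ * mm * (p * B * p) = (mm * TAᴴ * (mm * p) * B) * p
      from by noncomm_ring]
    rw [Matrix.trace_mul_comm (mm * TAᴴ * (mm * p) * B) p]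
    congr 1
    rw [hmp, show p * (mm * TAᴴ * q * B) = (p * mm) * TAᴴ * q * B from by noncomm_ring, hpm]
  have R : (mm * (p * A * p)ᴴ * mm * TB).trace = (Aᴴ * (q * TB * q)).trace := by
    conv_lhs => rw [show mm * (p * A * p)ᴴ * mm * TB = ((mm * p) * Aᴴ * (p * mm)) * TB from by
      rw [conjTranspose_mul, conjTranspose_mul, hp]; noncomm_ring]
    rw [hmp, hpm]
    conv_rhs => rw [show Aᴴ * (q * TB * q) = (Aᴴ * q * TB) * q from by noncomm_ring]
    rw [Matrix.trace_mul_comm (Aᴴ * q * TB) q]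
    congr 1
    noncomm_ring
  rw [L, ← key, R]

end phi

section eig
variable {ι : Type} [Fintype ι] {K : ι → Mat d} {σ : Mat d}

lemma eig_bound (hσ : σ.PosDef)
    (hK2 : ∑ j, (K j)ᴴ * K j = 1) (hfix : ∑ j, K j * σ * (K j)ᴴ = σ)
    (c : ℝ) (B : Mat d) (hB : B ≠ 0)
    (hSB : ∑ j, K j * B * (K j)ᴴ = (c : ℂ) • B) : |c| ≤ 1 := by
  have hwm : matPow σ (1/2) * matPow σ (-(1/2)) = 1 := by
    rw [matPow_mul_matPow hσ]; norm_num [matPow_zero hσ]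
  have hc := contraction_core (K := K) (matPow σ (-(1/2))) (matPow σ (1/2)) (matPow σ (-1)) σ
      (matPow_herm _) (matPow_herm _) (matPow_herm _)
      (by rw [matPow_mul_matPow hσ]; norm_num)
      (by rw [matPow_mul_matPow hσ]; norm_num [matPow_zero hσ])
      (by rw [matPow_mul_matPow hσ]
          have h1 : (1/2 + 1/2 : ℝ) = 1 := by norm_num
          rw [h1, matPow_one' hσ])
      (by have h := matPow_mul_matPow hσ (-1) 1
          rw [matPow_one' hσ] at h
          rw [h]
          have h0 : (-1 + 1 : ℝ) = 0 := by norm_num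
          rw [h0, matPow_zero hσ, one_mul])
      (trace_pos_part hσ) hK2 hfix B
  rw [hSB] at hc
  have hne : toE (matPow σ (-(1/2)) * B) ≠ 0 := by
    intro h
    have h2 : matPow σ (-(1/2)) * B = 0 := by
      apply toE.injective
      rw [h, map_zero]
    apply hB
    calc B = (matPow σ (1/2) * matPow σ (-(1/2))) * B := by rw [hwm, one_mul]
      _ = matPow σ (1/2) * (matPow σ (-(1/2)) * B) := by rw [mul_assoc]
      _ = 0 := by rw [h2, mul_zero]
  have hpos' : 0 < ‖toE (matPow σ (-(1/2)) * B)‖ := norm_pos_iff.mpr hne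
  have he : ‖toE (matPow σ (-(1/2)) * ((c:ℂ) • B))‖
      = |c| * ‖toE (matPow σ (-(1/2)) * B)‖ := by
    rw [mul_smul_comm, _root_.map_smul, norm_smul, Complex.norm_real, Real.norm_eq_abs]
  rw [he] at hc
  nlinarith

end eig

section helpers
variable {σ : Mat d} {Tstar : Module.End ℂ (Mat d)}

lemma Phi_G (hσ : σ.PosDef) (Z : Mat d) :
    Phi σ Tstar (matPow σ (-(1/4)) * Z * matPow σ (-(1/4)))
      = matPow σ (-(1/4)) * Tstar Z * matPow σ (-(1/4)) := by
  have hpq : matPow σ (1/4) * matPow σ (-(1/4)) = 1 := by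
    rw [matPow_mul_matPow hσ]; norm_num [matPow_zero hσ]
  have hqp : matPow σ (-(1/4)) * matPow σ (1/4) = 1 := by
    rw [matPow_mul_matPow hσ]; norm_num [matPow_zero hσ]
  rw [Phi_apply]
  congr 2
  rw [show matPow σ (1/4) * (matPow σ (-(1/4)) * Z * matPow σ (-(1/4))) * matPow σ (1/4)
      = (matPow σ (1/4) * matPow σ (-(1/4))) * Z * (matPow σ (-(1/4)) * matPow σ (1/4))
    from by noncomm_ring, hpq, hqp, one_mul, mul_one]

lemma PhiE_pow (hσ : σ.PosDef) (k : ℕ) (Z : Mat d) :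
    ((PhiE σ Tstar)^k) (toE (matPow σ (-(1/4)) * Z * matPow σ (-(1/4))))
      = toE (matPow σ (-(1/4)) * ((Tstar^k) Z) * matPow σ (-(1/4))) := by
  induction k with
  | zero => rw [pow_zero, pow_zero]; rfl
  | succ k ih =>
      rw [pow_succ', Module.End.mul_apply, ih, PhiE_apply, Phi_G hσ,
        pow_succ' Tstar k, Module.End.mul_apply]

lemma onb_norm_sq {N : ℕ} (b : OrthonormalBasis (Fin N) ℂ (E d)) (y : E d) :
    ‖y‖^2 = ∑ i, ‖b.repr y i‖^2 := by
  rw [← b.repr.norm_map y, EuclideanSpace.norm_eq, Real.sq_sqrt]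
  positivity

lemma exp_summable (t μ : ℝ) :
    Summable (fun k : ℕ => Real.exp (-t) * t^k / (Nat.factorial k) * μ^k) := by
  have h : ∀ k:ℕ, Real.exp (-t) * t^k / (Nat.factorial k) * μ^k
      = Real.exp (-t) * ((t*μ)^k / (Nat.factorial k)) := by
    intro k; rw [mul_pow]; ring
  rw [funext h]
  exact (Real.summable_pow_div_factorial (t*μ)).mul_left _

lemma exp_tsum (t μ : ℝ) :
    ∑' k : ℕ, (Real.exp (-t) * t^k / (Nat.factorial k) * μ^k) = Real.exp (t*μ - t) := by
  have h : ∀ k:ℕ, Real.exp (-t) * t^k / (Nat.factorial k) * μ^k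
      = Real.exp (-t) * ((t*μ)^k / (Nat.factorial k)) := by
    intro k; rw [mul_pow]; ring
  rw [tsum_congr h, tsum_mul_left,
    show (∑' k:ℕ, (t*μ)^k / (Nat.factorial k)) = Real.exp (t*μ) from by
      rw [Real.exp_eq_exp_ℝ, NormedSpace.exp_eq_tsum_div],
    ← Real.exp_add]
  ring_nf

end helpers

section herm
variable {σ : Mat d}

lemma chi2_eq' (hσ : σ.PosDef) (D : Mat d)
    (hherm : (matPow σ (-(1/4)) * D * matPow σ (-(1/4)))ᴴ
      = matPow σ (-(1/4)) * D * matPow σ (-(1/4))) :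
    (D * matPow σ (-(1/2)) * D * matPow σ (-(1/2))).trace.re
      = ‖toE (matPow σ (-(1/4)) * D * matPow σ (-(1/4)))‖^2 := by
  have hqq : matPow σ (-(1/4)) * matPow σ (-(1/4)) = matPow σ (-(1/2)) := by
    rw [matPow_mul_matPow hσ]; norm_num
  set q := matPow σ (-(1/4)) with hq
  rw [norm_toE_sq, hherm]
  congr 1
  calc (D * matPow σ (-(1/2)) * D * matPow σ (-(1/2))).trace
      = ((D * (q*q) * D * q) * q).trace := by rw [← hqq]; congr 1; noncomm_ring
    _ = (q * (D * (q*q) * D * q)).trace := Matrix.trace_mul_comm _ _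
    _ = ((q*D*q) * (q*D*q)).trace := by congr 1; noncomm_ring

end herm
end Aux

open Aux

set_option maxHeartbeats 2000000 in
theorem main_thm (σ : Mat d)
    (hσ : σ.PosDef) (hσ1 : σ.trace = 1)
    (Tstar S : Module.End ℂ (Mat d))
    (hlazy : Tstar = (2 : ℂ)⁻¹ • (LinearMap.id + S))
    (hS : ∃ (ι : Type) (_ : Fintype ι) (K : ι → Mat d),
        (∀ ρ : Mat d, S ρ = ∑ j, K j * ρ * (K j)ᴴ) ∧ ∑ j, (K j)ᴴ * K j = (1 : Mat d))
    (hstat : Tstar σ = σ)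
    (hprim : ∀ ρ : Mat d, ρ.PosSemidef → ρ.trace = 1 → Tstar ρ = ρ → ρ = σ)
    (hrev : ∀ A B : Mat d,
        (matPow σ (-(1/2)) * Aᴴ * matPow σ (-(1/2)) * Tstar B).trace
          = (matPow σ (-(1/2)) * (Tstar A)ᴴ * matPow σ (-(1/2)) * B).trace)
    (ρ : Mat d) (hρ : ρ.PosSemidef) (hρ1 : ρ.trace = 1) (n : ℕ) (hn : 0 < n) :
    (((Tstar ^ n) ρ - σ) * matPow σ (-(1/2)) * ((Tstar ^ n) ρ - σ) * matPow σ (-(1/2))).trace.re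
      ≤ (((∑' k : ℕ, ((Real.exp (-(n:ℝ)) * (n:ℝ) ^ k / (Nat.factorial k) : ℝ) : ℂ) • ((Tstar ^ k) ρ)) - σ)
          * matPow σ (-(1/2)) *
        ((∑' k : ℕ, ((Real.exp (-(n:ℝ)) * (n:ℝ) ^ k / (Nat.factorial k) : ℝ) : ℂ) • ((Tstar ^ k) ρ)) - σ)
          * matPow σ (-(1/2))).trace.re := by
  obtain ⟨ι, hι, K, hK1, hK2⟩ := hS
  set t : ℝ := (n : ℝ) with htdef
  have ht0 : 0 ≤ t := Nat.cast_nonneg n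
  set c : ℕ → ℝ := fun k => Real.exp (-t) * t ^ k / (Nat.factorial k) with hcdef
  have hc0 : ∀ k, 0 ≤ c k := by
    intro k
    apply div_nonneg (mul_nonneg (Real.exp_nonneg _) (pow_nonneg ht0 _))
    positivity
  have hcsum : Summable c := by
    have := exp_summable t 1
    simpa using this
  -- basic matrix powers
  set q := matPow σ (-(1/4)) with hqdef
  set p := matPow σ (1/4) with hpdef
  have hqherm : qᴴ = q := matPow_herm _
  have hpq : p * q = 1 := by
    rw [hpdef, hqdef, matPow_mul_matPow hσ]; norm_num [matPow_zero hσ]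
  have hqp : q * p = 1 := by
    rw [hpdef, hqdef, matPow_mul_matPow hσ]; norm_num [matPow_zero hσ]
  -- S fixes σ
  have hSσ : S σ = σ := by
    rw [hlazy] at hstat
    simp only [LinearMap.smul_apply, LinearMap.add_apply, LinearMap.id_apply] at hstat
    have h2 : σ + S σ = (2:ℂ) • σ := by
      have := congrArg (fun z => (2:ℂ) • z) hstat
      simpa [smul_smul] using this
    have := h2
    rw [two_smul] at this
    exact add_left_cancel this
  have hfix : ∑ j, K j * σ * (K j)ᴴ = σ := by rw [← hK1 σ]; exact hSσ
  -- Hermiticity preservation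
  have hTherm : ∀ A : Mat d, Aᴴ = A → (Tstar A)ᴴ = Tstar A := by
    intro A hA
    rw [hlazy]
    simp only [LinearMap.smul_apply, LinearMap.add_apply, LinearMap.id_apply, hK1 A]
    rw [conjTranspose_smul, conjTranspose_add, hA, conjTranspose_sum]
    congr 1
    · simp
    congr 1
    refine Finset.sum_congr rfl fun j _ => ?_
    rw [conjTranspose_mul, conjTranspose_mul, conjTranspose_conjTranspose, hA, mul_assoc]
  have hTpowherm : ∀ (k : ℕ) (A : Mat d), Aᴴ = A → ((Tstar^k) A)ᴴ = (Tstar^k) A := by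
    intro k
    induction k with
    | zero => intro A hA; simpa using hA
    | succ k ih =>
        intro A hA
        rw [pow_succ', Module.End.mul_apply]
        exact hTherm _ (ih A hA)
  have hρσherm : (ρ - σ)ᴴ = ρ - σ := by
    rw [conjTranspose_sub, hρ.1, hσ.1]
  -- spectral decomposition
  have hsym : (PhiE σ Tstar).IsSymmetric := PhiE_symmetric hσ hrev
  have hrank : Module.finrank ℂ (E d) = d * d := by
    simp [finrank_euclideanSpace]
  set b := hsym.eigenvectorBasis hrank with hbdef
  set μ := hsym.eigenvalues hrank with hμdef
  have hb : ∀ i, PhiE σ Tstar (b i) = (μ i : ℂ) • b i := fun i =>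
    hsym.apply_eigenvectorBasis hrank i
  -- eigenvalue bounds
  have hμbound : ∀ i, 0 ≤ μ i ∧ μ i ≤ 1 := by
    intro i
    set A := toE.symm (b i) with hA
    have hAne : A ≠ 0 := by
      intro h
      have : b i = 0 := by
        rw [← toE.apply_symm_apply (b i), ← hA, h, map_zero]
      exact b.orthonormal.ne_zero i this
    set B' := p * A * p with hB'
    have hB'ne : B' ≠ 0 := by
      intro h
      apply hAne
      calc A = (q * p) * A * (p * q) := by rw [hqp, hpq, one_mul, mul_one]
        _ = q * B' * q := by rw [hB']; noncomm_ring
        _ = 0 := by rw [h, mul_zero, zero_mul]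
    have hPhiA : Phi σ Tstar A = (μ i : ℂ) • A := by
      apply toE.injective
      rw [← PhiE_apply, _root_.map_smul, toE.apply_symm_apply, hb i]
    have hTB' : Tstar B' = (μ i : ℂ) • B' := by
      have h1 : p * (Phi σ Tstar A) * p = Tstar B' := by
        rw [Phi_apply, ← hqdef, ← hpdef, ← hB',
          show p * (q * Tstar B' * q) * p = (p * q) * Tstar B' * (q * p) from by noncomm_ring,
          hpq, hqp, one_mul, mul_one]
      rw [← h1, hPhiA, mul_smul_comm, smul_mul_assoc]
    have hSB' : ∑ j, K j * B' * (K j)ᴴ = ((2 * μ i - 1 : ℝ) : ℂ) • B' := by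
      rw [← hK1 B']
      have h2 : Tstar B' = (2:ℂ)⁻¹ • (B' + S B') := by
        rw [hlazy]
        simp only [LinearMap.smul_apply, LinearMap.add_apply, LinearMap.id_apply]
      have h3 : B' + S B' = (2:ℂ) • ((μ i : ℂ) • B') := by
        rw [← hTB', h2, smul_smul]
        norm_num
      have h4 : S B' = (2:ℂ) • ((μ i : ℂ) • B') - B' := by
        rw [← h3]; abel
      rw [h4, smul_smul]
      push_cast
      rw [sub_smul, one_smul]
    have := eig_bound hσ hK2 hfix (2 * μ i - 1) B' hB'ne hSB'
    rw [abs_le] at this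
    constructor <;> linarith [this.1, this.2]
  -- coordinates
  set x := toE (q * (ρ - σ) * q) with hx
  have hcoord : ∀ (k : ℕ) (y : E d) (i : Fin (d*d)),
      b.repr (((PhiE σ Tstar)^k) y) i = (μ i : ℂ)^k * b.repr y i := by
    intro k
    induction k with
    | zero => intro y i; simp
    | succ k ih =>
        intro y i
        rw [pow_succ', Module.End.mul_apply, b.repr_apply_apply, ← hsym _ _, hb i,
          inner_smul_left, Complex.conj_ofReal, ← b.repr_apply_apply, ih, pow_succ']
        ring
  -- iterates fix σ
  have hpowfix : ∀ k : ℕ, (Tstar^k) σ = σ := by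
    intro k
    induction k with
    | zero => simp
    | succ k ih => rw [pow_succ', Module.End.mul_apply, ih, hstat]
  have hdiff : ∀ k : ℕ, (Tstar^k) ρ - σ = (Tstar^k) (ρ - σ) := by
    intro k
    rw [map_sub, hpowfix k]
  -- discrete side
  have hdherm : (q * ((Tstar^n) ρ - σ) * q)ᴴ = q * ((Tstar^n) ρ - σ) * q := by
    rw [hdiff n, conjTranspose_mul, conjTranspose_mul, hqherm,
      hTpowherm n _ hρσherm, mul_assoc]
  have hdisc : (((Tstar ^ n) ρ - σ) * matPow σ (-(1/2)) * ((Tstar ^ n) ρ - σ)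
      * matPow σ (-(1/2))).trace.re = ∑ i, ‖(μ i : ℂ)^n * b.repr x i‖^2 := by
    rw [chi2_eq' hσ _ (by rw [← hqdef]; exact hdherm), ← hqdef]
    rw [hdiff n, ← PhiE_pow hσ, ← hx, onb_norm_sq b]
    refine Finset.sum_congr rfl fun i _ => ?_
    rw [hcoord n x i]
  -- continuous-time side
  let Esymm : E d →L[ℂ] Mat d :=
    { toLinearMap := (toE.symm : E d ≃ₗ[ℂ] Mat d).toLinearMap
      cont := LinearMap.continuous_of_finiteDimensional _ }
  let Pc : Mat d →L[ℂ] Mat d :=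
    { toLinearMap := conjBy p
      cont := LinearMap.continuous_of_finiteDimensional _ }
  let J : E d →L[ℂ] Mat d := Pc.comp Esymm
  set g : ℕ → E d := fun k => (c k : ℂ) • ((PhiE σ Tstar)^k) x with hgdef
  have hpowle : ∀ k : ℕ, ‖((PhiE σ Tstar)^k) x‖ ≤ ‖x‖ := by
    intro k
    have h1 : ‖((PhiE σ Tstar)^k) x‖^2 ≤ ‖x‖^2 := by
      rw [onb_norm_sq b, onb_norm_sq b x]
      refine Finset.sum_le_sum fun i _ => ?_
      rw [hcoord k x i, norm_mul]
      have h2 : ‖(μ i:ℂ)^k‖ ≤ 1 := by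
        rw [norm_pow, Complex.norm_real]
        exact pow_le_one₀ (abs_nonneg _)
          (abs_le.mpr ⟨by linarith [(hμbound i).1], (hμbound i).2⟩)
      calc (‖(μ i:ℂ)^k‖ * ‖b.repr x i‖)^2 ≤ (1 * ‖b.repr x i‖)^2 := by
            apply pow_le_pow_left₀ (by positivity)
              (mul_le_mul_of_nonneg_right h2 (norm_nonneg _))
        _ = ‖b.repr x i‖^2 := by rw [one_mul]
    nlinarith [norm_nonneg (((PhiE σ Tstar)^k) x), norm_nonneg x]
  have hgsum : Summable g := by
    apply Summable.of_norm_bounded (g := fun k => c k * ‖x‖) (hcsum.mul_right _)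
    intro k
    calc ‖g k‖ = c k * ‖((PhiE σ Tstar)^k) x‖ := by
          rw [hgdef]
          rw [norm_smul, Complex.norm_real, Real.norm_eq_abs, abs_of_nonneg (hc0 k)]
      _ ≤ c k * ‖x‖ := mul_le_mul_of_nonneg_left (hpowle k) (hc0 k)
  set Y := ∑' k, g k with hYdef
  have hEg : ∀ k : ℕ, Esymm (g k) = (c k:ℂ) • (q * ((Tstar^k) (ρ - σ)) * q) := by
    intro k
    rw [hgdef]
    have h0 : Esymm (((PhiE σ Tstar)^k) x) = q * ((Tstar^k) (ρ - σ)) * q := by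
      show toE.symm (((PhiE σ Tstar)^k) x) = q * ((Tstar^k) (ρ - σ)) * q
      rw [hx, PhiE_pow hσ, ← hqdef, toE.symm_apply_apply]
    rw [_root_.map_smul, h0]
  have hterm : ∀ k : ℕ, (c k : ℂ) • ((Tstar^k) ρ) = J (g k) + (c k : ℂ) • σ := by
    intro k
    have h2 : J (g k) = (c k:ℂ) • ((Tstar^k) ρ - σ) := by
      show Pc (Esymm (g k)) = _
      rw [hEg k, _root_.map_smul]
      have h3 : Pc (q * ((Tstar^k) (ρ - σ)) * q) = (Tstar^k) (ρ - σ) := by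
        show p * (q * ((Tstar^k) (ρ - σ)) * q) * p = _
        rw [show p * (q * ((Tstar^k) (ρ - σ)) * q) * p
            = (p * q) * ((Tstar^k) (ρ - σ)) * (q * p) from by noncomm_ring,
          hpq, hqp, one_mul, mul_one]
      rw [h3, hdiff k]
    rw [h2, smul_sub, sub_add_cancel]
  have hsum1 : Summable (fun k => J (g k)) := by
    have := hgsum.map (J : E d →L[ℂ] Mat d) J.continuous
    exact this
  have hsum2 : Summable (fun k => (c k : ℂ) • σ) :=
    ((Complex.summable_ofReal).mpr hcsum).smul_const σ
  have hctsum : (∑' k, c k) = 1 := by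
    calc ∑' k, c k = ∑' k, c k * 1^k := by simp
      _ = Real.exp (t*1 - t) := exp_tsum t 1
      _ = 1 := by simp
  have hcont : (∑' k : ℕ, ((Real.exp (-t) * t ^ k / (Nat.factorial k) : ℝ) : ℂ)
        • ((Tstar ^ k) ρ)) - σ = p * (toE.symm Y) * p := by
    have h1 : (∑' k : ℕ, ((Real.exp (-t) * t ^ k / (Nat.factorial k) : ℝ) : ℂ)
        • ((Tstar ^ k) ρ)) = ∑' k, (J (g k) + (c k:ℂ) • σ) := tsum_congr hterm
    have h2 : ∑' k, (J (g k) + (c k:ℂ) • σ)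
        = (∑' k, J (g k)) + (∑' k, (c k:ℂ) • σ) := Summable.tsum_add hsum1 hsum2
    have h3 : ∑' k, J (g k) = J Y := (J.map_tsum hgsum).symm
    have h4 : (∑' k, (c k:ℂ) • σ) = σ := by
      rw [Summable.tsum_smul_const ((Complex.summable_ofReal).mpr hcsum), ← Complex.ofReal_tsum,
        hctsum, Complex.ofReal_one, one_smul]
    have h5 : J Y = p * (toE.symm Y) * p := rfl
    rw [h1, h2, h3, h4, h5, add_sub_cancel_right]
  have hYherm : (toE.symm Y)ᴴ = toE.symm Y := by
    have h1 : toE.symm Y = ∑' k, (c k:ℂ) • (q * ((Tstar^k) (ρ-σ)) * q) := by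
      calc toE.symm Y = Esymm Y := rfl
        _ = ∑' k, Esymm (g k) := Esymm.map_tsum hgsum
        _ = ∑' k, (c k:ℂ) • (q * ((Tstar^k) (ρ-σ)) * q) := tsum_congr hEg
    have h2 : ∀ k : ℕ, star ((c k:ℂ) • (q * ((Tstar^k) (ρ-σ)) * q))
        = (c k:ℂ) • (q * ((Tstar^k) (ρ-σ)) * q) := by
      intro k
      rw [star_smul, Complex.star_def, Complex.conj_ofReal]
      congr 1
      rw [Matrix.star_eq_conjTranspose, conjTranspose_mul, conjTranspose_mul, hqherm,
        hTpowherm k _ hρσherm, mul_assoc]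
    calc (toE.symm Y)ᴴ = star (toE.symm Y) := rfl
      _ = ∑' k, star ((c k:ℂ) • (q * ((Tstar^k) (ρ-σ)) * q)) := by rw [h1, tsum_star]
      _ = toE.symm Y := by rw [tsum_congr h2, ← h1]
  have hqWq : q * (p * (toE.symm Y) * p) * q = toE.symm Y := by
    rw [show q * (p * (toE.symm Y) * p) * q = (q * p) * (toE.symm Y) * (p * q)
      from by noncomm_ring, hqp, hpq, one_mul, mul_one]
  have hccoord : ∀ i, b.repr Y i = ((Real.exp (t * μ i - t) : ℝ) : ℂ) * b.repr x i := by
    intro i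
    rw [b.repr_apply_apply]
    calc ⟪b i, Y⟫_ℂ = ∑' k, ⟪b i, g k⟫_ℂ := by
          rw [hYdef]
          have h := (innerSL ℂ (b i)).map_tsum hgsum
          simp only [innerSL_apply_apply] at h
          exact h
      _ = ∑' k, ((c k:ℂ) * (μ i:ℂ)^k) * b.repr x i := by
          refine tsum_congr fun k => ?_
          rw [hgdef]
          rw [inner_smul_right, ← b.repr_apply_apply, hcoord k x i]
          ring
      _ = (∑' k, ((c k:ℂ) * (μ i:ℂ)^k)) * b.repr x i := tsum_mul_right
      _ = ((Real.exp (t * μ i - t) : ℝ) : ℂ) * b.repr x i := by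
          congr 1
          rw [show (fun k : ℕ => (c k:ℂ) * (μ i:ℂ)^k)
              = fun k : ℕ => ((c k * (μ i)^k : ℝ) : ℂ) from funext fun k => by push_cast; ring,
            ← Complex.ofReal_tsum, exp_tsum t (μ i)]
  -- assemble
  rw [hdisc, hcont, chi2_eq' hσ _ (by rw [← hqdef, hqWq]; exact hYherm), ← hqdef, hqWq,
    toE.apply_symm_apply, onb_norm_sq b]
  refine Finset.sum_le_sum fun i _ => ?_
  rw [hccoord i]
  have h1 : ‖(μ i:ℂ)^n * b.repr x i‖ ≤ ‖((Real.exp (t * μ i - t) : ℝ) : ℂ) * b.repr x i‖ := by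
    simp only [norm_mul, norm_pow, Complex.norm_real, Real.norm_eq_abs]
    rw [abs_of_nonneg (hμbound i).1, abs_of_nonneg (Real.exp_nonneg _)]
    refine mul_le_mul_of_nonneg_right ?_ (norm_nonneg _)
    have h2 : μ i ≤ Real.exp (μ i - 1) := by
      have := Real.add_one_le_exp (μ i - 1)
      linarith
    calc (μ i)^n ≤ (Real.exp (μ i - 1))^n := pow_le_pow_left₀ (hμbound i).1 h2 n
      _ = Real.exp (t * μ i - t) := by
          rw [← Real.exp_nat_mul, htdef]
          congr 1
          ring
  calc ‖(μ i:ℂ)^n * b.repr x i‖^2 ≤ ‖((Real.exp (t * μ i - t) : ℝ) : ℂ) * b.repr x i‖^2 :=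
    pow_le_pow_left₀ (norm_nonneg _) h1 2

/-- for a lazy, primitive, reversible quantum channel, the discrete
iterates converge at least as fast in χ² as the continuous-time semigroup generated by
`L = T − id`: `χ²(T*ⁿ(ρ),σ) ≤ χ²(T*_n(ρ),σ)`. -/
theorem lazy_discrete_vs_continuous_chi2 (σ : Mat d)
    (hσ : σ.PosDef) (hσ1 : σ.trace = 1)
    (Tstar S : Module.End ℂ (Mat d))
    -- `T` is lazy: `T = (id + S)/2` for a quantum channel `S`
    (hlazy : Tstar = (2 : ℂ)⁻¹ • (LinearMap.id + S))
    (hS : ∃ (ι : Type) (_ : Fintype ι) (K : ι → Mat d),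
        (∀ ρ : Mat d, S ρ = ∑ j, K j * ρ * (K j)ᴴ) ∧ ∑ j, (K j)ᴴ * K j = (1 : Mat d))
    -- `σ` is stationary and `T` is primitive (unique stationary state)
    (hstat : Tstar σ = σ)
    (hprim : ∀ ρ : Mat d, ρ.PosSemidef → ρ.trace = 1 → Tstar ρ = ρ → ρ = σ)
    -- reversibility: `T*` is selfadjoint w.r.t. the σ-weighted inner product
    (hrev : ∀ A B : Mat d,
        (matPow σ (-(1/2)) * Aᴴ * matPow σ (-(1/2)) * Tstar B).trace
          = (matPow σ (-(1/2)) * (Tstar A)ᴴ * matPow σ (-(1/2)) * B).trace)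
    (ρ : Mat d) (hρ : ρ.PosSemidef) (hρ1 : ρ.trace = 1) (n : ℕ) (hn : 0 < n) :
    chi2 ((Tstar ^ n) ρ) σ ≤ chi2 (contT Tstar (n : ℝ) ρ) σ := by
  unfold chi2 contT
  exact main_thm σ hσ hσ1 Tstar S hlazy hS hstat hprim hrev ρ hρ hρ1 n hn
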